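/- Let Φ be the standard normal distribution function. There exists a constant c > 0 such that for all n ≥ 2, all t ∈ [0, √(log n)], and t₁ = t + B(log n)/√n with a fixed constant B > 0: 1 ≥ (1 - Φ(t₁))/(1 - Φ(t)) ≥ 1 - c(t+1)(log n)/√n. -/

import Mathlib

open MeasureTheory

/-- The standard normal distribution function. -/
noncomputable def stdNormalCDF (t : ℝ) : ℝ :=
  (Real.sqrt (2 * Real.pi))⁻¹ * ∫ u in Set.Iic t, Real.exp (-u ^ 2 / 2)

private lemma gInt : Integrable (fun u : ℝ => Real.exp (-u ^ 2 / 2)) := by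
  have h := integrable_exp_neg_mul_sq (show (0:ℝ) < 1/2 by norm_num)
  have : (fun u : ℝ => Real.exp (-u ^ 2 / 2)) = fun u : ℝ => Real.exp (-(1/2) * u ^ 2) := by
    funext u; congr 1; ring
  rw [this]; exact h

private lemma gTotal : (∫ u : ℝ, Real.exp (-u ^ 2 / 2)) = Real.sqrt (2 * Real.pi) := by
  have h := integral_gaussian (1/2 : ℝ)
  have e1 : (fun u : ℝ => Real.exp (-u ^ 2 / 2)) = fun u : ℝ => Real.exp (-(1/2) * u ^ 2) := by
    funext u; congr 1; ring
  rw [e1, h]; congr 1; field_simp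

private lemma tail_eq (t : ℝ) :
    1 - stdNormalCDF t = (Real.sqrt (2 * Real.pi))⁻¹ * ∫ u in Set.Ioi t, Real.exp (-u ^ 2 / 2) := by
  have hs : (0:ℝ) < Real.sqrt (2 * Real.pi) := Real.sqrt_pos.mpr (by positivity)
  have hsplit := intervalIntegral.integral_Iic_add_Ioi (b := t) gInt.integrableOn gInt.integrableOn
  rw [gTotal] at hsplit
  unfold stdNormalCDF
  have : (∫ u in Set.Ioi t, Real.exp (-u ^ 2 / 2))
      = Real.sqrt (2 * Real.pi) - ∫ u in Set.Iic t, Real.exp (-u ^ 2 / 2) := by linarith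
  rw [this, mul_sub, inv_mul_cancel₀ (ne_of_gt hs)]

private lemma mid_ub (t d : ℝ) (ht : 0 ≤ t) (hd : 0 ≤ d) :
    (∫ u in Set.Ioc t (t + d), Real.exp (-u ^ 2 / 2)) ≤ d * Real.exp (-t ^ 2 / 2) := by
  have h1 : (∫ u in Set.Ioc t (t + d), Real.exp (-u ^ 2 / 2))
      ≤ ∫ _u in Set.Ioc t (t + d), Real.exp (-t ^ 2 / 2) := by
    apply setIntegral_mono_on gInt.integrableOn (integrableOn_const measure_Ioc_lt_top.ne)
      measurableSet_Ioc
    intro u hu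
    apply Real.exp_le_exp.mpr
    have h2 : t ≤ u := le_of_lt hu.1
    nlinarith [sq_nonneg (u - t)]
  calc (∫ u in Set.Ioc t (t + d), Real.exp (-u ^ 2 / 2))
      ≤ _ := h1
    _ = d * Real.exp (-t ^ 2 / 2) := by
        rw [setIntegral_const, Real.volume_real_Ioc_of_le (by linarith), smul_eq_mul]
        congr 1
        ring

private lemma tail_lb (t : ℝ) (ht : 0 ≤ t) :
    Real.exp (-(t ^ 2 + 3) / 2) / (t + 1) ≤ ∫ u in Set.Ioi t, Real.exp (-u ^ 2 / 2) := by
  set δ : ℝ := 1 / (t + 1) with hδ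
  have ht1 : (0:ℝ) < t + 1 := by linarith
  have hδpos : 0 < δ := by positivity
  have hδle : δ ≤ 1 := by rw [hδ]; rw [div_le_one ht1]; linarith
  have htδ : t * δ ≤ 1 := by
    rw [hδ, mul_one_div, div_le_one ht1]; linarith
  have h1 : (∫ _u in Set.Ioc t (t + δ), Real.exp (-(t ^ 2 + 3) / 2))
      ≤ ∫ u in Set.Ioc t (t + δ), Real.exp (-u ^ 2 / 2) := by
    apply setIntegral_mono_on (integrableOn_const measure_Ioc_lt_top.ne)
      gInt.integrableOn measurableSet_Ioc
    intro u hu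
    apply Real.exp_le_exp.mpr
    have h2 : t < u := hu.1
    have h3 : u ≤ t + δ := hu.2
    nlinarith [sq_nonneg δ, hδpos.le]
  have h2 : (∫ _u in Set.Ioc t (t + δ), Real.exp (-(t ^ 2 + 3) / 2))
      = δ * Real.exp (-(t ^ 2 + 3) / 2) := by
    rw [setIntegral_const, Real.volume_real_Ioc_of_le (by linarith), smul_eq_mul]
    congr 1
    ring
  have h3 : (∫ u in Set.Ioc t (t + δ), Real.exp (-u ^ 2 / 2))
      ≤ ∫ u in Set.Ioi t, Real.exp (-u ^ 2 / 2) := by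
    apply setIntegral_mono_set gInt.integrableOn
    · filter_upwards with u using Real.exp_nonneg _
    · exact Filter.Eventually.of_forall (Set.Ioc_subset_Ioi_self)
  have : Real.exp (-(t ^ 2 + 3) / 2) / (t + 1) = δ * Real.exp (-(t ^ 2 + 3) / 2) := by
    rw [hδ]; ring
  linarith [this ▸ (h2 ▸ h1)]

/-- There is `c > 0` such that for all `n ≥ 2`, `t ∈ [0, √(log n)]`, and
`t₁ = t + B log n/√n`, one has
`1 ≥ (1 - Φ(t₁))/(1 - Φ(t)) ≥ 1 - c(t+1)(log n)/√n`. -/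
theorem normal_tail_ratio_moderate (B : ℝ) (hB : 0 < B) :
    ∃ c : ℝ, 0 < c ∧ ∀ n : ℕ, 2 ≤ n →
      ∀ t : ℝ, t ∈ Set.Icc 0 (Real.sqrt (Real.log n)) →
        1 ≥ (1 - stdNormalCDF (t + B * Real.log n / Real.sqrt n)) / (1 - stdNormalCDF t) ∧
        (1 - stdNormalCDF (t + B * Real.log n / Real.sqrt n)) / (1 - stdNormalCDF t) ≥
          1 - c * (t + 1) * Real.log n / Real.sqrt n := by
  refine ⟨B * Real.exp (3/2), by positivity, fun n hn t ht => ?_⟩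
  obtain ⟨ht0, -⟩ := ht
  have hs : (0:ℝ) < Real.sqrt (2 * Real.pi) := Real.sqrt_pos.mpr (by positivity)
  have hn1 : (1:ℝ) ≤ (n:ℝ) := by exact_mod_cast Nat.one_le_of_lt hn
  have hL : 0 ≤ Real.log n := Real.log_nonneg hn1
  have hS : (0:ℝ) < Real.sqrt n := Real.sqrt_pos.mpr (by linarith)
  set D : ℝ := B * Real.log n / Real.sqrt n with hD
  have hD0 : 0 ≤ D := by positivity
  set A : ℝ := ∫ u in Set.Ioi (t + D), Real.exp (-u ^ 2 / 2) with hA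
  set Bb : ℝ := ∫ u in Set.Ioi t, Real.exp (-u ^ 2 / 2) with hBb
  have ht1 : (0:ℝ) < t + 1 := by linarith
  have hBb_lb : Real.exp (-(t ^ 2 + 3) / 2) / (t + 1) ≤ Bb := tail_lb t ht0
  have hBbpos : 0 < Bb := lt_of_lt_of_le (by positivity) hBb_lb
  have hratio : (1 - stdNormalCDF (t + D)) / (1 - stdNormalCDF t) = A / Bb := by
    rw [tail_eq, tail_eq, mul_div_mul_left _ _ (inv_ne_zero hs.ne')]
  have hAB : A ≤ Bb := by
    apply setIntegral_mono_set gInt.integrableOn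
    · filter_upwards with u using Real.exp_nonneg _
    · exact Filter.Eventually.of_forall (Set.Ioi_subset_Ioi (by linarith))
  have hsplit : (∫ u in Set.Ioc t (t + D), Real.exp (-u ^ 2 / 2)) + A = Bb := by
    rw [hA, hBb, ← setIntegral_union (Set.Ioc_disjoint_Ioi le_rfl) measurableSet_Ioi
      gInt.integrableOn gInt.integrableOn,
      Set.Ioc_union_Ioi_eq_Ioi (le_add_of_nonneg_right hD0)]
  have hmid : (∫ u in Set.Ioc t (t + D), Real.exp (-u ^ 2 / 2)) ≤ D * Real.exp (-t ^ 2 / 2) :=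
    mid_ub t D ht0 hD0
  set E : ℝ := D * (t + 1) * Real.exp (3/2) with hE
  have hE0 : 0 ≤ E := by positivity
  have hEeq : B * Real.exp (3/2) * (t + 1) * Real.log n / Real.sqrt n = E := by
    rw [hE, hD]; ring
  have hexp : Real.exp (3/2) * Real.exp (-(t ^ 2 + 3) / 2) = Real.exp (-t ^ 2 / 2) := by
    rw [← Real.exp_add]; congr 1; ring
  have key : D * Real.exp (-t ^ 2 / 2) ≤ E * Bb := by
    have h1 : E * (Real.exp (-(t ^ 2 + 3) / 2) / (t + 1)) = D * Real.exp (-t ^ 2 / 2) := by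
      calc E * (Real.exp (-(t ^ 2 + 3) / 2) / (t + 1))
          = D * (Real.exp (3/2) * Real.exp (-(t ^ 2 + 3) / 2)) * ((t + 1) / (t + 1)) := by
            rw [hE]; ring
        _ = D * Real.exp (-t ^ 2 / 2) := by rw [hexp, div_self ht1.ne', mul_one]
    calc D * Real.exp (-t ^ 2 / 2) = E * (Real.exp (-(t ^ 2 + 3) / 2) / (t + 1)) := h1.symm
      _ ≤ E * Bb := mul_le_mul_of_nonneg_left hBb_lb hE0
  constructor
  · rw [hratio]
    exact (div_le_one hBbpos).mpr hAB
  · rw [ge_iff_le, hratio, hEeq, le_div_iff₀ hBbpos]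
    nlinarith [hsplit, hmid, key]
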